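/- Let p ≥ 1 and m ≥ 2 be integers and let D_SG(m) = {i/(m−1) : i = 0, 1, …, m−1}^p be the static grid design with m^p points. Then there exists a monotone function f ∈ Ω (namely f(x) = −1 if x_k < 1 for every k and f(x) = 1 otherwise) such that V(U(D_SG(m), f)) = 1 − (m−2)^p/(m−1)^p; in particular sup_{f ∈ Ω} V(U(D_SG(m), f)) = 1 − (m−2)^p/(m−1)^p. -/

import Mathlib

open MeasureTheory Set

attribute [local instance] Classical.propDecidable

/-- The uncertain region `U(D, f)` on the cube `[0,1]^p`. -/
def uncertainRegion (p : ℕ) (D : Set (Fin p → ℝ)) (f : (Fin p → ℝ) → ℝ) :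
    Set (Fin p → ℝ) :=
  Icc 0 1 \ ((⋃ x ∈ {y ∈ D | f y = -1}, Icc (0 : Fin p → ℝ) x) ∪
             (⋃ x ∈ {y ∈ D | f y = 1}, Icc x (1 : Fin p → ℝ)))

/-- `Ω`: monotone `{-1,1}`-valued functions on the cube `[0,1]^p`. -/
def OmegaSet (p : ℕ) : Set ((Fin p → ℝ) → ℝ) :=
  {f | MonotoneOn f (Icc 0 1) ∧ ∀ x ∈ Icc (0 : Fin p → ℝ) 1, f x = -1 ∨ f x = 1}

/-- The static grid design `D_SG(m) = {i/(m-1) : i = 0, …, m-1}^p`. -/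
def staticGrid (p m : ℕ) : Set (Fin p → ℝ) :=
  {x | ∀ k, ∃ i : ℕ, i < m ∧ x k = (i : ℝ) / ((m : ℝ) - 1)}

noncomputable def fstar (p : ℕ) : (Fin p → ℝ) → ℝ :=
  fun x => if (∀ k, x k < 1) then (-1 : ℝ) else 1

lemma fstar_mem_Omega (p : ℕ) : fstar p ∈ OmegaSet p := by
  constructor
  · intro x _ y _ hxy
    unfold fstar
    by_cases hy : ∀ k, y k < 1
    · have hx : ∀ k, x k < 1 := fun k => lt_of_le_of_lt (hxy k) (hy k)
      rw [if_pos hx, if_pos hy]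
    · rw [if_neg hy]
      split <;> norm_num
  · intro x _
    unfold fstar
    split
    · exact Or.inl rfl
    · exact Or.inr rfl

lemma minus_union_eq (p m : ℕ) (hm : 2 ≤ m) :
    (⋃ x ∈ {y ∈ staticGrid p m | fstar p y = -1}, Icc (0 : Fin p → ℝ) x)
      = Icc (0 : Fin p → ℝ) (fun _ => ((m : ℝ) - 2) / ((m : ℝ) - 1)) := by
  have hden : (0 : ℝ) < (m : ℝ) - 1 := by
    have : (2 : ℝ) ≤ (m : ℝ) := by exact_mod_cast hm
    linarith
  have hclt : ((m : ℝ) - 2) / ((m : ℝ) - 1) < 1 := by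
    rw [div_lt_one hden]; linarith
  apply Set.Subset.antisymm
  · apply Set.iUnion₂_subset
    rintro x ⟨hxD, hxf⟩
    have hall : ∀ k, x k < 1 := by
      by_contra h
      rw [fstar, if_neg h] at hxf
      norm_num at hxf
    apply Set.Icc_subset_Icc le_rfl
    intro k
    obtain ⟨i, him, hxi⟩ := hxD k
    have hi1 : (i : ℝ) < (m : ℝ) - 1 := by
      have := hall k
      rw [hxi, div_lt_one hden] at this
      exact this
    have hinat : i < m - 1 := by
      have : (i : ℝ) < ((m - 1 : ℕ) : ℝ) := by push_cast [Nat.cast_sub (by omega : 1 ≤ m)]; linarith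
      exact_mod_cast this
    have : (i : ℝ) ≤ (m : ℝ) - 2 := by
      have h2 : i + 1 ≤ m - 1 := hinat
      have : ((i : ℝ) + 1) ≤ (m : ℝ) - 1 := by
        have := (Nat.cast_le (α := ℝ)).mpr h2
        push_cast [Nat.cast_sub (by omega : 1 ≤ m)] at this
        linarith
      linarith
    rw [hxi]
    show (i : ℝ) / ((m : ℝ) - 1) ≤ ((m : ℝ) - 2) / ((m : ℝ) - 1)
    gcongr
  · have hc0 : 0 ≤ ((m : ℝ) - 2) / ((m : ℝ) - 1) := by
      apply div_nonneg _ hden.le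
      have : (2 : ℝ) ≤ (m : ℝ) := by exact_mod_cast hm
      linarith
    refine Set.subset_iUnion₂_of_subset (fun _ => ((m : ℝ) - 2) / ((m : ℝ) - 1)) ?_ subset_rfl
    constructor
    · intro k
      refine ⟨m - 2, by omega, ?_⟩
      push_cast [Nat.cast_sub (by omega : 2 ≤ m)]
      ring
    · rw [fstar, if_pos (fun k => hclt)]

lemma attain_volume (p m : ℕ) (hm : 2 ≤ m) :
    volume (uncertainRegion p (staticGrid p m) (fstar p))
      = ENNReal.ofReal (1 - ((m : ℝ) - 2) ^ p / ((m : ℝ) - 1) ^ p) := by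
  have hm2 : (2 : ℝ) ≤ (m : ℝ) := by exact_mod_cast hm
  have hden : (0 : ℝ) < (m : ℝ) - 1 := by linarith
  set c : ℝ := ((m : ℝ) - 2) / ((m : ℝ) - 1) with hc
  have hc0 : 0 ≤ c := div_nonneg (by linarith) hden.le
  have hc1 : c ≤ 1 := by rw [hc, div_le_one hden]; linarith
  set cv : Fin p → ℝ := fun _ => c with hcv
  set N : Set (Fin p → ℝ) := ⋃ k, {x | x k = 1} with hNdef
  set A : Set (Fin p → ℝ) := Icc 0 1 \ Icc 0 cv with hA
  have hN : volume N = 0 := by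
    refine measure_iUnion_null fun k => ?_
    rw [volume_pi]
    exact Measure.pi_hyperplane _ k 1
  have hU : uncertainRegion p (staticGrid p m) (fstar p)
      = A \ (⋃ x ∈ {y ∈ staticGrid p m | fstar p y = 1}, Icc x (1 : Fin p → ℝ)) := by
    rw [uncertainRegion, minus_union_eq p m hm, ← Set.diff_diff, hA]
  have hsub1 : uncertainRegion p (staticGrid p m) (fstar p) ⊆ A := by
    rw [hU]; exact Set.diff_subset
  have hsub2 : A \ N ⊆ uncertainRegion p (staticGrid p m) (fstar p) := by
    rw [hU]
    rintro x ⟨hxA, hxN⟩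
    refine ⟨hxA, fun hxP => hxN ?_⟩
    obtain ⟨g, hg, hx⟩ := Set.mem_iUnion₂.mp hxP
    obtain ⟨hgD, hgf⟩ := hg
    have : ¬ ∀ k, g k < 1 := by
      intro h
      rw [fstar, if_pos h] at hgf
      norm_num at hgf
    push_neg at this
    obtain ⟨k, hk⟩ := this
    refine Set.mem_iUnion.mpr ⟨k, ?_⟩
    have hle : x k ≤ 1 := hxA.1.2 k
    have hge : (1 : ℝ) ≤ x k := le_trans hk (hx.1 k)
    exact le_antisymm hle hge
  have hIccsub : Icc (0 : Fin p → ℝ) cv ⊆ Icc 0 1 :=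
    Set.Icc_subset_Icc le_rfl (fun k => hc1)
  have hvolcv : volume (Icc (0 : Fin p → ℝ) cv) = ENNReal.ofReal (c ^ p) := by
    rw [Real.volume_Icc_pi]
    have : ∀ i : Fin p, ENNReal.ofReal (cv i - (0 : Fin p → ℝ) i) = ENNReal.ofReal c := by
      intro i; simp [hcv]
    rw [Finset.prod_congr rfl (fun i _ => this i), Finset.prod_const, Finset.card_univ,
      Fintype.card_fin, ← ENNReal.ofReal_pow hc0]
  have hvolA : volume A = ENNReal.ofReal (1 - c ^ p) := by
    rw [hA, measure_diff hIccsub measurableSet_Icc.nullMeasurableSet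
      (by rw [hvolcv]; exact ENNReal.ofReal_ne_top)]
    rw [hvolcv, Real.volume_Icc_pi]
    have h1 : ∏ i : Fin p, ENNReal.ofReal ((1 : Fin p → ℝ) i - (0 : Fin p → ℝ) i) = 1 := by
      simp
    rw [h1, ENNReal.ofReal_sub _ (pow_nonneg hc0 p), ENNReal.ofReal_one]
  have key : volume (uncertainRegion p (staticGrid p m) (fstar p))
      = ENNReal.ofReal (1 - c ^ p) := by
    refine le_antisymm ((measure_mono hsub1).trans (le_of_eq hvolA)) ?_
    calc ENNReal.ofReal (1 - c ^ p) = volume A := hvolA.symm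
      _ ≤ volume ((A \ N) ∪ N) := measure_mono (Set.subset_diff_union A N)
      _ ≤ volume (A \ N) + volume N := measure_union_le _ _
      _ = volume (A \ N) := by rw [hN, add_zero]
      _ ≤ _ := measure_mono hsub2
  rw [key, hc, div_pow]


lemma upper_bound (p m : ℕ) (hp : 1 ≤ p) (hm : 2 ≤ m) (f : (Fin p → ℝ) → ℝ)
    (hf : f ∈ OmegaSet p) :
    volume (uncertainRegion p (staticGrid p m) f)
      ≤ ENNReal.ofReal (1 - ((m : ℝ) - 2) ^ p / ((m : ℝ) - 1) ^ p) := by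
  obtain ⟨n, rfl⟩ : ∃ n, m = n + 1 := ⟨m - 1, by omega⟩
  have hn : 1 ≤ n := by omega
  have hnR : (0 : ℝ) < (n : ℝ) := by exact_mod_cast hn
  haveI hne' : Nonempty (Fin p) := Fin.pos_iff_nonempty.mp (by omega)
  have hne : (Finset.univ : Finset (Fin p)).Nonempty := Finset.univ_nonempty
  -- cell corners
  set a : (Fin p → Fin n) → (Fin p → ℝ) := fun j k => ((j k : ℕ) : ℝ) / n with ha
  set b : (Fin p → Fin n) → (Fin p → ℝ) := fun j k => (((j k : ℕ) : ℝ) + 1) / n with hb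
  have haD : ∀ j, a j ∈ staticGrid p (n + 1) := by
    intro j k
    refine ⟨(j k : ℕ), by omega, ?_⟩
    rw [ha]
    push_cast
    ring
  have hbD : ∀ j, b j ∈ staticGrid p (n + 1) := by
    intro j k
    refine ⟨(j k : ℕ) + 1, by have := (j k).isLt; omega, ?_⟩
    rw [hb]
    push_cast
    ring
  have hjklt : ∀ (j : Fin p → Fin n) k, ((j k : ℕ) : ℝ) < (n : ℝ) := by
    intro j k; exact_mod_cast (j k).isLt
  have haI : ∀ j, a j ∈ Icc (0 : Fin p → ℝ) 1 := by
    intro j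
    constructor <;> intro k
    · show (0:ℝ) ≤ ((j k : ℕ) : ℝ) / n
      positivity
    · show ((j k : ℕ) : ℝ) / n ≤ 1
      rw [div_le_one hnR]
      exact (hjklt j k).le
  have hbI : ∀ j, b j ∈ Icc (0 : Fin p → ℝ) 1 := by
    intro j
    constructor <;> intro k
    · show (0:ℝ) ≤ (((j k : ℕ) : ℝ) + 1) / n
      positivity
    · show (((j k : ℕ) : ℝ) + 1) / n ≤ 1
      rw [div_le_one hnR]
      have := hjklt j k
      have hz : ((j k : ℕ) : ℝ) + 1 ≤ (n:ℝ) := by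
        have : ((j k : ℕ) + 1 : ℕ) ≤ n := (j k).isLt
        exact_mod_cast this
      linarith
  set S : Finset (Fin p → Fin n) :=
    Finset.univ.filter (fun j => f (a j) = -1 ∧ f (b j) = 1) with hS
  -- covering
  have hcover : uncertainRegion p (staticGrid p (n + 1)) f ⊆ ⋃ j ∈ S, Icc (a j) (b j) := by
    rintro x ⟨hx, hxn⟩
    have hj : ∀ k, ∃ i : Fin n, ((i : ℕ) : ℝ) / n ≤ x k ∧ x k ≤ (((i : ℕ) : ℝ) + 1) / n := by
      intro k
      have hx0 : 0 ≤ x k := hx.1 k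
      have hx1 : x k ≤ 1 := hx.2 k
      set i0 := ⌊(n : ℝ) * x k⌋₊ with hi0
      by_cases hcase : i0 ≤ n - 1
      · refine ⟨⟨i0, by omega⟩, ?_, ?_⟩
        · rw [div_le_iff₀ hnR]
          have := Nat.floor_le (show (0:ℝ) ≤ (n:ℝ) * x k by positivity)
          rw [← hi0] at this
          linarith [this]
        · rw [le_div_iff₀ hnR]
          have := Nat.lt_floor_add_one ((n : ℝ) * x k)
          rw [← hi0] at this
          push_cast
          linarith [this]
      · refine ⟨⟨n - 1, by omega⟩, ?_, ?_⟩
        · have h1x : (1:ℝ) ≤ x k := by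
            have hn' : n ≤ i0 := by omega
            have h2 : (n : ℝ) ≤ (n : ℝ) * x k :=
              (Nat.le_floor_iff (n := n) (show (0:ℝ) ≤ (n:ℝ) * x k by positivity)).mp hn'
            nlinarith
          show ((n - 1 : ℕ) : ℝ) / (n : ℝ) ≤ x k
          have h3 : ((n - 1 : ℕ) : ℝ) / (n : ℝ) ≤ 1 := by
            rw [div_le_one hnR]
            exact_mod_cast Nat.sub_le n 1
          linarith
        · rw [le_div_iff₀ hnR]
          have : ((n - 1 : ℕ) : ℝ) + 1 = (n : ℝ) := by
            push_cast [Nat.cast_sub hn]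
            ring
          rw [this]
          nlinarith
    choose j hj1 hj2 using hj
    have hxa : a j ≤ x := fun k => hj1 k
    have hxb : x ≤ b j := fun k => hj2 k
    have hfa : f (a j) = -1 := by
      rcases hf.2 (a j) (haI j) with h | h
      · exact h
      · exfalso
        apply hxn
        rw [Set.mem_union]
        right
        rw [Set.mem_iUnion₂]
        exact ⟨a j, ⟨haD j, h⟩, hxa, hx.2⟩
    have hfb : f (b j) = 1 := by
      rcases hf.2 (b j) (hbI j) with h | h
      · exfalso
        apply hxn
        rw [Set.mem_union]
        left
        rw [Set.mem_iUnion₂]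
        exact ⟨b j, ⟨hbD j, h⟩, hx.1, hxb⟩
      · exact h
    exact Set.mem_iUnion₂.mpr
      ⟨j, Finset.mem_filter.mpr ⟨Finset.mem_univ _, hfa, hfb⟩, ⟨hxa, hxb⟩⟩
  -- cardinality bound
  set t : (Fin p → Fin n) → ℕ := fun j => Finset.univ.inf' hne (fun k => (j k : ℕ)) with ht
  have htle : ∀ (j : Fin p → Fin n) k, t j ≤ (j k : ℕ) :=
    fun j k => Finset.inf'_le _ (Finset.mem_univ k)
  set φ : (Fin p → Fin n) → (Fin p → Fin n) :=
    fun j k => (⟨(j k : ℕ) - t j, lt_of_le_of_lt (Nat.sub_le _ _) (j k).isLt⟩ : Fin n) with hφ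
  set T : Finset (Fin p → Fin n) :=
    Finset.univ.filter (fun j => ∃ k, (j k : ℕ) = 0) with hT
  have hφT : ∀ j ∈ S, φ j ∈ T := by
    intro j _
    obtain ⟨k0, -, hk0⟩ := Finset.exists_mem_eq_inf' hne (fun k => ((j k : ℕ) : ℕ))
    refine Finset.mem_filter.mpr ⟨Finset.mem_univ _, ⟨k0, ?_⟩⟩
    have h0 : t j = (j k0 : ℕ) := hk0
    show (j k0 : ℕ) - t j = 0
    omega
  have key : ∀ (j j' : Fin p → Fin n), f (b j) = 1 → f (a j') = -1 →
      ∀ d : ℕ, 0 < d → (∀ k, (j' k : ℕ) = (j k : ℕ) + d) → False := by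
    intro j j' hbj haj' d hd hdk
    have hle : b j ≤ a j' := by
      intro k
      show (((j k : ℕ) : ℝ) + 1) / n ≤ ((j' k : ℕ) : ℝ) / n
      have hc : ((j' k : ℕ) : ℝ) = ((j k : ℕ) : ℝ) + (d : ℝ) := by exact_mod_cast hdk k
      have hd1 : (1:ℝ) ≤ (d:ℝ) := by exact_mod_cast hd
      rw [hc]
      gcongr <;> linarith
    have := hf.1 (hbI j) (haI j') hle
    rw [hbj, haj'] at this
    linarith
  have hinj : Set.InjOn φ S := by
    intro j hjS j' hj'S hφeq
    have hjf := (Finset.mem_filter.mp hjS).2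
    have hj'f := (Finset.mem_filter.mp hj'S).2
    have hv : ∀ k, (j k : ℕ) - t j = (j' k : ℕ) - t j' :=
      fun k => congrArg Fin.val (congrFun hφeq k)
    rcases le_or_gt (t j) (t j') with h | h
    · by_cases hd : t j' - t j = 0
      · funext k
        exact Fin.ext (by have := hv k; have := htle j k; have := htle j' k; omega)
      · exact (key j j' hjf.2 hj'f.1 (t j' - t j) (by omega)
          (fun k => by have := hv k; have := htle j k; have := htle j' k; omega)).elim
    · exact (key j' j hj'f.2 hjf.1 (t j - t j') (by omega)
        (fun k => by have := hv k; have := htle j k; have := htle j' k; omega)).elim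
  have hcardT : T.card = n ^ p - (n - 1) ^ p := by
    haveI : NeZero n := ⟨by omega⟩
    have hsplit := Finset.card_filter_add_card_filter_not
      (s := (Finset.univ : Finset (Fin p → Fin n))) (p := fun j => ∃ k, (j k : ℕ) = 0)
    have huniv : (Finset.univ : Finset (Fin p → Fin n)).card = n ^ p := by
      simp [Finset.card_univ]
    have hsub : Fintype.card {i : Fin n // ¬ i = 0} = n - 1 := by
      rw [Fintype.card_subtype_compl, Fintype.card_subtype_eq, Fintype.card_fin]
    have hT' : (Finset.univ.filter
        (fun j : Fin p → Fin n => ¬ ∃ k, (j k : ℕ) = 0)).card = (n - 1) ^ p := by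
      rw [← Fintype.card_subtype]
      have e : {j : Fin p → Fin n // ¬ ∃ k, (j k : ℕ) = 0}
          ≃ ∀ _ : Fin p, {i : Fin n // ¬ i = 0} :=
        (Equiv.subtypeEquivRight (fun j => by
          push_neg
          simp only [Ne, Fin.val_eq_zero_iff, Set.mem_setOf_eq])).trans Equiv.subtypePiEquivPi
      rw [Fintype.card_congr e]
      simp [Fintype.card_pi, hsub]
    rw [hT', huniv] at hsplit
    exact Nat.eq_sub_of_add_eq hsplit
  have hcard : S.card ≤ n ^ p - (n - 1) ^ p := by
    rw [← hcardT]
    exact Finset.card_le_card_of_injOn φ hφT hinj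
  -- volume computation
  have hcell : ∀ j : Fin p → Fin n,
      volume (Icc (a j) (b j)) = ENNReal.ofReal ((1 / (n:ℝ)) ^ p) := by
    intro j
    rw [Real.volume_Icc_pi]
    have hstep : ∀ k : Fin p, ENNReal.ofReal (b j k - a j k) = ENNReal.ofReal (1 / (n:ℝ)) := by
      intro k
      congr 1
      show (((j k : ℕ) : ℝ) + 1) / n - ((j k : ℕ) : ℝ) / n = 1 / (n:ℝ)
      field_simp
      ring
    rw [Finset.prod_congr rfl (fun k _ => hstep k), Finset.prod_const, Finset.card_univ,
      Fintype.card_fin, ← ENNReal.ofReal_pow (by positivity)]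
  have hnp : (0 : ℝ) < (n : ℝ) ^ p := by positivity
  calc volume (uncertainRegion p (staticGrid p (n + 1)) f)
      ≤ volume (⋃ j ∈ S, Icc (a j) (b j)) := measure_mono hcover
    _ ≤ ∑ j ∈ S, volume (Icc (a j) (b j)) := measure_biUnion_finset_le _ _
    _ = S.card • ENNReal.ofReal ((1 / (n:ℝ)) ^ p) := by
        rw [Finset.sum_congr rfl (fun j _ => hcell j), Finset.sum_const]
    _ = ENNReal.ofReal ((S.card : ℝ) * (1 / (n:ℝ)) ^ p) := by
        rw [nsmul_eq_mul, ← ENNReal.ofReal_natCast, ← ENNReal.ofReal_mul (by positivity)]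
    _ ≤ ENNReal.ofReal (1 - ((↑(n + 1) : ℝ) - 2) ^ p / ((↑(n + 1) : ℝ) - 1) ^ p) := by
        apply ENNReal.ofReal_le_ofReal
        have hpow : (n - 1) ^ p ≤ n ^ p := Nat.pow_le_pow_left (by omega) p
        have h1 : (S.card : ℝ) ≤ (n : ℝ) ^ p - ((n : ℝ) - 1) ^ p := by
          have := (Nat.cast_le (α := ℝ)).mpr hcard
          rw [Nat.cast_sub hpow] at this
          push_cast [Nat.cast_sub hn] at this
          convert this using 2
        have hcast1 : ((↑(n + 1) : ℝ) - 2) = (n : ℝ) - 1 := by push_cast; ring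
        have hcast2 : ((↑(n + 1) : ℝ) - 1) = (n : ℝ) := by push_cast; ring
        rw [hcast1, hcast2]
        calc (S.card : ℝ) * (1 / (n:ℝ)) ^ p = (S.card : ℝ) / (n : ℝ) ^ p := by
              rw [one_div, inv_pow, div_eq_mul_inv]
          _ ≤ ((n : ℝ) ^ p - ((n : ℝ) - 1) ^ p) / (n : ℝ) ^ p := by gcongr
          _ = 1 - ((n : ℝ) - 1) ^ p / (n : ℝ) ^ p := by
              rw [sub_div, div_self hnp.ne']

/-- Theorem 1 (attainment part): the monotone function which is `-1` iff all coordinates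
are `< 1` attains uncertain volume `1 - (m-2)^p/(m-1)^p` on the static grid design, and
consequently the supremum over `Ω` equals this value. -/
theorem staticGrid_uncertain_volume_sup (p m : ℕ) (hp : 1 ≤ p) (hm : 2 ≤ m) :
    (∃ f ∈ OmegaSet p,
      (∀ x, f x = if (∀ k, x k < 1) then (-1 : ℝ) else 1) ∧
      volume (uncertainRegion p (staticGrid p m) f)
        = ENNReal.ofReal (1 - ((m : ℝ) - 2) ^ p / ((m : ℝ) - 1) ^ p)) ∧
    (⨆ f ∈ OmegaSet p, volume (uncertainRegion p (staticGrid p m) f))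
      = ENNReal.ofReal (1 - ((m : ℝ) - 2) ^ p / ((m : ℝ) - 1) ^ p) := by
  have hA := attain_volume p m hm
  have hf := fstar_mem_Omega p
  constructor
  · exact ⟨fstar p, hf, fun x => rfl, hA⟩
  · apply le_antisymm
    · exact iSup₂_le fun g hg => upper_bound p m hp hm g hg
    · calc ENNReal.ofReal (1 - ((m : ℝ) - 2) ^ p / ((m : ℝ) - 1) ^ p)
          = volume (uncertainRegion p (staticGrid p m) (fstar p)) := hA.symm
        _ ≤ ⨆ g ∈ OmegaSet p, volume (uncertainRegion p (staticGrid p m) g) :=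
          le_iSup₂ (f := fun g (_ : g ∈ OmegaSet p) =>
            volume (uncertainRegion p (staticGrid p m) g)) (fstar p) hf
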